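/- For every real number β with |β| > 1/2, there exist real numbers λ₁, λ₂, λ₃, each satisfying |λᵢ| > 1/2, such that for every real x, q_β(x) = (x − λ₁)(x − λ₂)(x − λ₃). In particular, q_β(x) ≠ 0 for every x in the interval [−1/2, 1/2]. -/
import Mathlib


theorem roots_of_q_beta_real_outside (β : ℝ) (hβ : 1/2 < |β|) :
    ∃ l₁ l₂ l₃ : ℝ, 1/2 < |l₁| ∧ 1/2 < |l₂| ∧ 1/2 < |l₃| ∧
      (∀ x : ℝ, x^3 - 3 * β * x^2 + β = (x - l₁) * (x - l₂) * (x - l₃)) ∧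
      (∀ x ∈ Set.Icc (-(1/2) : ℝ) (1/2), x^3 - 3 * β * x^2 + β ≠ 0) := by
  have hβ0 : β ≠ 0 := by
    intro h; rw [h] at hβ; simp at hβ; linarith
  have hβsq : (1:ℝ)/4 < β^2 := by
    have := sq_abs β
    nlinarith [hβ]
  -- key lemma: any real root has |l| > 1/2
  have hroot : ∀ l : ℝ, l^3 - 3*β*l^2 + β = 0 → 1/2 < |l| := by
    intro l hl
    by_contra h
    push_neg at h
    obtain ⟨h1, h2⟩ := abs_le.mp h
    have hpos : (0:ℝ) < 1 - 3*l^2 := by nlinarith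
    rcases lt_abs.mp hβ with hb | hb
    · nlinarith [mul_pos (by linarith : (0:ℝ) < β - 1/2) hpos,
        mul_nonneg (sq_nonneg (l-1)) (by linarith : (0:ℝ) ≤ 2*l+1)]
    · nlinarith [mul_pos (by linarith : (0:ℝ) < -β - 1/2) hpos,
        mul_nonneg (sq_nonneg (l+1)) (by linarith : (0:ℝ) ≤ 1-2*l)]
  set a : ℝ := 1 - 1/(2*β^2) with ha
  have h2b : (0:ℝ) < 2*β^2 := by positivity
  have ha1 : -1 ≤ a := by
    have hu : 1/(2*β^2) ≤ 2 := by rw [div_le_iff₀ h2b]; nlinarith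
    rw [ha]; linarith
  have ha2 : a ≤ 1 := by
    have : 0 < 1/(2*β^2) := by positivity
    rw [ha]; linarith
  set θ : ℝ := Real.arccos a / 3 with hθ
  set c : ℝ := Real.cos θ with hc
  set s : ℝ := Real.sin θ with hs'
  have hcos3 : Real.cos (3*θ) = a := by
    rw [hθ, show 3*(Real.arccos a / 3) = Real.arccos a by ring]
    exact Real.cos_arccos ha1 ha2
  have h3m : Real.cos (3*θ) = 4*c^3 - 3*c := by
    rw [Real.cos_three_mul θ]
  have hkey : 2*β^2*(4*c^3 - 3*c) = 2*β^2 - 1 := by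
    have h4 : 4*c^3 - 3*c = 1 - 1/(2*β^2) := by rw [← h3m, hcos3, ha]
    field_simp at h4
    linarith
  have hs : s^2 + c^2 = 1 := Real.sin_sq_add_cos_sq θ
  have hsq3 : (Real.sqrt 3)^2 = 3 := Real.sq_sqrt (by norm_num)
  have hfact : ∀ x : ℝ, x^3 - 3 * β * x^2 + β =
      (x - (β + 2*β*c)) * (x - (β - β*c - Real.sqrt 3 * β * s)) *
        (x - (β - β*c + Real.sqrt 3 * β * s)) := by
    intro x
    linear_combination (3*β^2*x - 3*β^3*(1+2*c))*hs +
      (β^2*s^2*(x - β*(1+2*c)))*hsq3 + β*hkey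
  refine ⟨β + 2*β*c, β - β*c - Real.sqrt 3 * β * s, β - β*c + Real.sqrt 3 * β * s,
    ?_, ?_, ?_, hfact, ?_⟩
  · exact hroot _ (by rw [hfact]; ring)
  · exact hroot _ (by rw [hfact]; ring)
  · exact hroot _ (by rw [hfact]; ring)
  · intro x hx hzero
    have := hroot x hzero
    rw [Set.mem_Icc] at hx
    have := abs_le.mpr hx
    linarith
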